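/- Let G be a finite simple graph of order n and let 0 ≤ k < n. Then G is k-{1,2}-factor-critical if and only if for every subset S of V(G) with |S| ≥ k, the number of isolated vertices of G − S is at most |S| − k. -/

import Mathlib

/-- A `{1,2}`-factor of `G` : a spanning subgraph `H ≤ G` all of whose connected components
are regular of degree one or two, i.e. every vertex has degree 1 or 2 in `H` and any two
vertices in the same component of `H` have equal degree. -/
def SimpleGraph.Has12Factor {V : Type*} [Fintype V] (G : SimpleGraph V) : Prop :=
  ∃ H : SimpleGraph V, H ≤ G ∧
    (∀ v : V, (H.neighborSet v).ncard = 1 ∨ (H.neighborSet v).ncard = 2) ∧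
    (∀ u v : V, H.Reachable u v → (H.neighborSet u).ncard = (H.neighborSet v).ncard)

/-- `G` is `k`-`{1,2}`-factor-critical if deleting any set of exactly `k` vertices leaves
a graph having a `{1,2}`-factor. -/
def SimpleGraph.Is12FactorCritical {V : Type*} [Fintype V] [DecidableEq V]
    (G : SimpleGraph V) (k : ℕ) : Prop :=
  ∀ S : Finset V, S.card = k → (G.induce ((Sᶜ : Finset V) : Set V)).Has12Factor


open SimpleGraph


section perm
variable {W : Type*} (f : W ≃ W)

private def permG (f : W ≃ W) : SimpleGraph W := SimpleGraph.fromRel (fun u v => v = f u)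

lemma perm_nbset (G' : SimpleGraph W) (hf : ∀ w, G'.Adj w (f w)) (v : W) :
    (permG f).neighborSet v = {f v, f.symm v} := by
  ext u
  simp only [permG, mem_neighborSet, fromRel_adj, Set.mem_insert_iff, Set.mem_singleton_iff]
  constructor
  · rintro ⟨hne, h | h⟩
    · exact Or.inl h
    · exact Or.inr (by rw [h, Equiv.symm_apply_apply])
  · rintro (h | h)
    · subst h; exact ⟨(hf v).ne, Or.inl rfl⟩
    · subst h
      have h2 := hf (f.symm v)
      rw [f.apply_symm_apply] at h2
      exact ⟨h2.ne', Or.inr (f.apply_symm_apply v).symm⟩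

lemma perm_deg_one (G' : SimpleGraph W) (hf : ∀ w, G'.Adj w (f w)) (v : W) :
    ((permG f).neighborSet v).ncard = 1 ↔ f (f v) = v := by
  rw [perm_nbset f G' hf]
  constructor
  · intro h1
    by_contra hne
    have hne' : f v ≠ f.symm v := by
      intro he
      apply hne
      have := congrArg f he
      rwa [f.apply_symm_apply] at this
    rw [Set.ncard_pair hne'] at h1
    omega
  · intro h
    have : f.symm v = f v := by
      apply f.injective
      rw [f.apply_symm_apply, h]
    rw [this, Set.pair_eq_singleton, Set.ncard_singleton]

lemma perm_deg_or (G' : SimpleGraph W) (hf : ∀ w, G'.Adj w (f w)) (v : W) :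
    ((permG f).neighborSet v).ncard = 1 ∨ ((permG f).neighborSet v).ncard = 2 := by
  rw [perm_nbset f G' hf]
  by_cases h : f v = f.symm v
  · rw [h, Set.pair_eq_singleton, Set.ncard_singleton]; left; rfl
  · rw [Set.ncard_pair h]; right; rfl

lemma perm_adj_deg (G' : SimpleGraph W) (hf : ∀ w, G'.Adj w (f w)) {u v : W}
    (h : (permG f).Adj u v) :
    ((permG f).neighborSet u).ncard = ((permG f).neighborSet v).ncard := by
  have key : ∀ a b : W, (permG f).Adj a b → f (f a) = a → f (f b) = b := by
    intro a b hab ha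
    have hsymm : f.symm a = f a := f.injective (by rw [f.apply_symm_apply, ha])
    have hb : b ∈ (permG f).neighborSet a := hab
    rw [perm_nbset f G' hf, hsymm, Set.pair_eq_singleton, Set.mem_singleton_iff] at hb
    subst hb
    rw [ha]
  rcases perm_deg_or f G' hf u with h1 | h2
  · rw [h1, eq_comm, perm_deg_one f G' hf]
    exact key u v h ((perm_deg_one f G' hf u).mp h1)
  · rw [h2]
    rcases perm_deg_or f G' hf v with hv1 | hv2
    · exfalso
      have := key v u h.symm ((perm_deg_one f G' hf v).mp hv1)
      have := (perm_deg_one f G' hf u).mpr this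
      omega
    · rw [hv2]

lemma perm_factor [Fintype W] (G' : SimpleGraph W) (hf : ∀ w, G'.Adj w (f w)) :
    G'.Has12Factor := by
  refine ⟨permG f, ?_, fun v => perm_deg_or f G' hf v, ?_⟩
  · intro a b hab
    rcases hab.2 with h | h
    · rw [h]; exact hf a
    · rw [h]; exact (hf b).symm
  · intro u v h
    obtain ⟨w⟩ := h
    induction w with
    | nil => rfl
    | cons hadj _ ih => exact (perm_adj_deg f G' hf hadj).trans ih

end perm

section countlemma
open Finset

lemma deg_bound {W : Type*} [Fintype W] [DecidableEq W] (H : SimpleGraph W) [DecidableRel H.Adj]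
    (hdeg : ∀ v, H.degree v = 1 ∨ H.degree v = 2)
    (hreg : ∀ u v : W, H.Adj u v → H.degree u = H.degree v)
    (I : Finset W) :
    I.card ≤ (I.biUnion (fun v => H.neighborFinset v)).card := by
  classical
  set nbF : W → Finset W := fun v => H.neighborFinset v with hnbF
  set I₁ := I.filter (fun v => H.degree v = 1) with hI₁
  set I₂ := I.filter (fun v => H.degree v = 2) with hI₂
  set N₁ := I₁.biUnion nbF with hN₁
  set N₂ := I₂.biUnion nbF with hN₂
  have hIunion : I = I₁ ∪ I₂ := by
    ext v
    simp only [hI₁, hI₂, mem_union, mem_filter]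
    constructor
    · intro hv; rcases hdeg v with h | h
      · exact Or.inl ⟨hv, h⟩
      · exact Or.inr ⟨hv, h⟩
    · rintro (⟨hv, _⟩ | ⟨hv, _⟩) <;> exact hv
  have hNunion : I.biUnion nbF = N₁ ∪ N₂ := by
    rw [hIunion]
    ext u
    simp only [hN₁, hN₂, mem_biUnion, mem_union]
    constructor
    · rintro ⟨v, hv | hv, h⟩
      · exact Or.inl ⟨v, hv, h⟩
      · exact Or.inr ⟨v, hv, h⟩
    · rintro (⟨v, hv, h⟩ | ⟨v, hv, h⟩)
      · exact ⟨v, Or.inl hv, h⟩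
      · exact ⟨v, Or.inr hv, h⟩
  -- deg-1 vertices have singleton neighborhoods
  have hsingle : ∀ v : W, H.degree v = 1 → ∀ u ∈ nbF v, nbF v = {u} := by
    intro v hv u hu
    apply Finset.eq_singleton_iff_unique_mem.mpr
    refine ⟨hu, fun w hw => ?_⟩
    have : (nbF v).card = 1 := hv
    rw [Finset.card_eq_one] at this
    obtain ⟨a, ha⟩ := this
    rw [ha] at hu hw
    simp at hu hw; rw [hu, hw]
  have hdisj : Disjoint N₁ N₂ := by
    rw [Finset.disjoint_left]
    intro u hu1 hu2
    simp only [hN₁, hN₂, mem_biUnion, hI₁, hI₂, mem_filter] at hu1 hu2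
    obtain ⟨v, ⟨-, hv1⟩, hvu⟩ := hu1
    obtain ⟨w, ⟨-, hw2⟩, hwu⟩ := hu2
    rw [mem_neighborFinset] at hvu hwu
    have hdu : H.degree u = 1 := (hreg v u hvu).symm.trans hv1
    have : nbF u = {v} := hsingle u hdu v (by rw [mem_neighborFinset]; exact hvu.symm)
    have hw : w ∈ nbF u := by rw [mem_neighborFinset]; exact hwu.symm
    rw [this, mem_singleton] at hw
    rw [hw] at hw2
    rw [hv1] at hw2
    exact absurd hw2 (by norm_num)
  -- step 1
  have hne1 : ∀ v ∈ I₁, (nbF v).Nonempty := by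
    intro v hv
    rw [hI₁, mem_filter] at hv
    have h : (nbF v).card = 1 := hv.2
    rw [← Finset.card_pos, h]
    norm_num
  have step1 : I₁.card ≤ N₁.card := by
    set g : W → W := fun v => if h : (nbF v).Nonempty then h.choose else v with hg
    apply Finset.card_le_card_of_injOn g
    · intro v hv
      have := hne1 v hv
      rw [hN₁, Finset.mem_coe, mem_biUnion]
      exact ⟨v, hv, by rw [hg]; simp only [dif_pos this]; exact this.choose_spec⟩
    · intro v hv v' hv' heq
      have h1 := hne1 v hv
      have h2 := hne1 v' hv'
      have hgv : g v ∈ nbF v := by rw [hg]; simp only [dif_pos h1]; exact h1.choose_spec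
      have hgv' : g v' ∈ nbF v' := by rw [hg]; simp only [dif_pos h2]; exact h2.choose_spec
      rw [heq] at hgv
      set u := g v' with hu
      simp only [Finset.mem_coe, hI₁, mem_filter] at hv hv'
      rw [mem_neighborFinset] at hgv hgv'
      have hdu : H.degree u = 1 := (hreg v' u hgv').symm.trans hv'.2
      have h3 : nbF u = {v} := hsingle u hdu v (by rw [mem_neighborFinset]; exact hgv.symm)
      have h4 : v' ∈ nbF u := by rw [mem_neighborFinset]; exact hgv'.symm
      rw [h3, mem_singleton] at h4
      exact h4.symm
  -- step 2
  have step2 : I₂.card ≤ N₂.card := by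
    have hsub : ∀ v ∈ I₂, nbF v ⊆ N₂ := by
      intro v hv u hu
      rw [hN₂, mem_biUnion]; exact ⟨v, hv, hu⟩
    have count1 : ∑ v ∈ I₂, (N₂.filter (fun u => H.Adj v u)).card = 2 * I₂.card := by
      rw [Finset.sum_congr rfl (fun v hv => ?_), Finset.sum_const, smul_eq_mul, mul_comm]
      have : N₂.filter (fun u => H.Adj v u) = nbF v := by
        ext u
        simp only [mem_filter, hnbF, mem_neighborFinset]
        exact ⟨fun h => h.2, fun h => ⟨hsub v hv (by rw [mem_neighborFinset]; exact h), h⟩⟩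
      rw [this]
      rw [hI₂, mem_filter] at hv
      exact hv.2
    have count2 : ∑ u ∈ N₂, (I₂.filter (fun v => H.Adj v u)).card ≤ 2 * N₂.card := by
      rw [mul_comm, ← smul_eq_mul, ← Finset.sum_const]
      apply Finset.sum_le_sum
      intro u hu
      have hd : H.degree u = 2 := by
        rw [hN₂, mem_biUnion] at hu
        obtain ⟨v, hv, hvu⟩ := hu
        rw [hnbF, mem_neighborFinset] at hvu
        rw [hI₂, mem_filter] at hv
        exact (hreg v u hvu).symm.trans hv.2
      calc (I₂.filter (fun v => H.Adj v u)).card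
          ≤ (nbF u).card := Finset.card_le_card (by
            intro v hv
            rw [mem_filter] at hv
            rw [hnbF, mem_neighborFinset]
            exact hv.2.symm)
        _ = 2 := hd
    have swap : ∑ v ∈ I₂, (N₂.filter (fun u => H.Adj v u)).card
        = ∑ u ∈ N₂, (I₂.filter (fun v => H.Adj v u)).card := by
      simp only [Finset.card_filter]
      rw [Finset.sum_comm]
    omega
  calc I.card = (I₁ ∪ I₂).card := by rw [← hIunion]
    _ ≤ I₁.card + I₂.card := Finset.card_union_le _ _
    _ ≤ N₁.card + N₂.card := by omega
    _ = (N₁ ∪ N₂).card := (Finset.card_union_of_disjoint hdisj).symm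
    _ = (I.biUnion nbF).card := by rw [hNunion]

end countlemma


lemma ncard_nb {W : Type*} [Fintype W] (H : SimpleGraph W) [DecidableRel H.Adj] (v : W) :
    (H.neighborSet v).ncard = H.degree v := by
  rw [← SimpleGraph.card_neighborSet_eq_degree, Set.ncard_eq_toFinset_card', Set.toFinset_card]


/-- `G` of order `n`, `0 ≤ k < n`, is `k`-`{1,2}`-factor-critical iff
`i(G - S) ≤ |S| - k` for every `S ⊆ V(G)` with `|S| ≥ k`. -/
theorem stmt_1 {V : Type*} [Fintype V] [DecidableEq V] (G : SimpleGraph V) (k : ℕ)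
    (hk : k < Fintype.card V) :
    G.Is12FactorCritical k ↔
      ∀ S : Finset V, k ≤ S.card →
        {v : V | v ∉ S ∧ ∀ u : V, u ∉ S → ¬ G.Adj v u}.ncard ≤ S.card - k := by
  classical
  constructor
  · -- forward direction
    intro hcrit S hS
    obtain ⟨T, hTS, hTcard⟩ := Finset.exists_subset_card_eq hS
    obtain ⟨H, hHle, hHdeg, hHreg⟩ := hcrit T hTcard
    haveI : DecidableRel H.Adj := Classical.decRel _
    have hdeg' : ∀ v, H.degree v = 1 ∨ H.degree v = 2 := by
      intro v; rw [← ncard_nb]; exact hHdeg v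
    have hreg' : ∀ u v, H.Adj u v → H.degree u = H.degree v := fun u v h => by
      rw [← ncard_nb, ← ncard_nb]; exact hHreg u v h.reachable
    set F : Finset V := Finset.univ.filter (fun v => v ∉ S ∧ ∀ u, u ∉ S → ¬G.Adj v u) with hF
    have hset : {v : V | v ∉ S ∧ ∀ u : V, u ∉ S → ¬ G.Adj v u} = ↑F := by
      ext v; simp [hF]
    rw [hset, Set.ncard_coe_finset]
    set I : Finset ((↑(Tᶜ) : Set V)) :=
      Finset.univ.filter (fun w => w.val ∈ F) with hI
    have hFeq : F = I.image Subtype.val := by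
      ext v
      simp only [hI, Finset.mem_image, Finset.mem_filter, Finset.mem_univ, true_and]
      constructor
      · intro hv
        have hvT : v ∈ (↑(Tᶜ) : Set V) := by
          simp only [Finset.coe_compl, Set.mem_compl_iff, Finset.mem_coe]
          intro hvT
          rw [hF, Finset.mem_filter] at hv
          exact hv.2.1 (hTS hvT)
        exact ⟨⟨v, hvT⟩, hv, rfl⟩
      · rintro ⟨w, hw, rfl⟩; exact hw
    have hFI : F.card = I.card := by
      rw [hFeq, Finset.card_image_of_injective _ Subtype.val_injective]
    set N := I.biUnion (fun v => H.neighborFinset v) with hN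
    have h1 : I.card ≤ N.card := deg_bound H hdeg' hreg' I
    have h2 : N.card ≤ (S \ T).card := by
      rw [← Finset.card_image_of_injective N Subtype.val_injective]
      apply Finset.card_le_card
      intro u hu
      simp only [Finset.mem_image] at hu
      obtain ⟨w, hw, rfl⟩ := hu
      rw [hN, Finset.mem_biUnion] at hw
      obtain ⟨v, hv, hadj⟩ := hw
      rw [SimpleGraph.mem_neighborFinset] at hadj
      have hGadj : G.Adj v.val w.val := by
        have := hHle hadj
        simpa using this
      rw [hI, Finset.mem_filter] at hv
      have hvF := hv.2
      rw [hF, Finset.mem_filter] at hvF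
      have hwS : w.val ∈ S := by
        by_contra hns
        exact hvF.2.2 w.val hns hGadj
      have hwT : w.val ∉ T := by
        have := w.2
        simpa using this
      rw [Finset.mem_sdiff]
      exact ⟨hwS, hwT⟩
    have h3 : (S \ T).card = S.card - k := by
      rw [Finset.card_sdiff_of_subset hTS, hTcard]
    omega
  · -- backward direction
    intro hcond T hTcard
    haveI : DecidableRel (G.induce ((↑(Tᶜ) : Finset V) : Set V)).Adj := Classical.decRel _
    set G' := G.induce ((↑(Tᶜ) : Finset V) : Set V) with hG'
    have hall : ∀ A : Finset ((↑(Tᶜ) : Finset V) : Set V),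
        A.card ≤ (A.biUnion (fun v => G'.neighborFinset v)).card := by
      intro A
      by_contra hlt
      push_neg at hlt
      set Nb := A.biUnion (fun v => G'.neighborFinset v) with hNb
      set I := A \ Nb with hI
      set NI := I.biUnion (fun v => G'.neighborFinset v) with hNI
      have hNIsub : NI ⊆ Nb \ A := by
        intro u hu
        rw [hNI, Finset.mem_biUnion] at hu
        obtain ⟨v, hv, hadj⟩ := hu
        rw [SimpleGraph.mem_neighborFinset] at hadj
        rw [hI, Finset.mem_sdiff] at hv
        rw [Finset.mem_sdiff]
        constructor
        · rw [hNb, Finset.mem_biUnion]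
          exact ⟨v, hv.1, by rw [SimpleGraph.mem_neighborFinset]; exact hadj⟩
        · intro huA
          apply hv.2
          rw [hNb, Finset.mem_biUnion]
          exact ⟨u, huA, by rw [SimpleGraph.mem_neighborFinset]; exact hadj.symm⟩
      have hIcard : NI.card < I.card := by
        have h1 := Finset.card_le_card hNIsub
        have h2 := Finset.card_sdiff_add_card_inter Nb A
        have h3 := Finset.card_sdiff_add_card_inter A Nb
        have h4 : (Nb ∩ A).card = (A ∩ Nb).card := by rw [Finset.inter_comm]
        have h5 : I.card = (A \ Nb).card := rfl
        omega
      set S : Finset V := T ∪ NI.image Subtype.val with hS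
      have hdisjS : Disjoint T (NI.image Subtype.val) := by
        rw [Finset.disjoint_left]
        intro a haT ha
        simp only [Finset.mem_image] at ha
        obtain ⟨w, _, rfl⟩ := ha
        have := w.2
        simp only [Finset.coe_compl, Set.mem_compl_iff, Finset.mem_coe] at this
        exact this haT
      have hScard : S.card = k + NI.card := by
        rw [hS, Finset.card_union_of_disjoint hdisjS, hTcard,
          Finset.card_image_of_injective _ Subtype.val_injective]
      have hks : k ≤ S.card := by omega
      have hcond' := hcond S hks
      have hsub : (↑(I.image Subtype.val) : Set V) ⊆
          {v : V | v ∉ S ∧ ∀ u : V, u ∉ S → ¬ G.Adj v u} := by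
        intro v hv
        simp only [Finset.coe_image, Set.mem_image, Finset.mem_coe] at hv
        obtain ⟨w, hwI, rfl⟩ := hv
        constructor
        · rw [hS, Finset.mem_union]
          rintro (h | h)
          · have := w.2
            simp only [Finset.coe_compl, Set.mem_compl_iff, Finset.mem_coe] at this
            exact this h
          · simp only [Finset.mem_image] at h
            obtain ⟨w', hw', hww⟩ := h
            have : w' = w := Subtype.val_injective hww
            subst this
            exact (Finset.mem_sdiff.mp (hNIsub hw')).2 ((Finset.mem_sdiff.mp hwI).1)
        · intro u huS hadj
          have huT : u ∉ T := fun h => huS (by rw [hS, Finset.mem_union]; exact Or.inl h)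
          have huW : u ∈ ((↑(Tᶜ) : Finset V) : Set V) := by
            simp only [Finset.coe_compl, Set.mem_compl_iff, Finset.mem_coe]
            exact huT
          have hadj' : G'.Adj w ⟨u, huW⟩ := by
            simp only [hG', SimpleGraph.comap_adj, Function.Embedding.coe_subtype]
            exact hadj
          apply huS
          rw [hS, Finset.mem_union]
          right
          rw [Finset.mem_image]
          refine ⟨⟨u, huW⟩, ?_, rfl⟩
          rw [hNI, Finset.mem_biUnion]
          exact ⟨w, hwI, by rw [SimpleGraph.mem_neighborFinset]; exact hadj'⟩
      have hfin : I.card ≤ NI.card := by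
        calc I.card = (I.image Subtype.val).card :=
              (Finset.card_image_of_injective _ Subtype.val_injective).symm
          _ = (↑(I.image Subtype.val) : Set V).ncard := (Set.ncard_coe_finset _).symm
          _ ≤ {v : V | v ∉ S ∧ ∀ u : V, u ∉ S → ¬ G.Adj v u}.ncard :=
              Set.ncard_le_ncard hsub (Set.toFinite _)
          _ ≤ S.card - k := hcond'
          _ = NI.card := by omega
      omega
    obtain ⟨f, hfinj, hf⟩ := (Finset.all_card_le_biUnion_card_iff_exists_injective _).mp hall
    have hbij : Function.Bijective f := Finite.injective_iff_bijective.mp hfinj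
    exact perm_factor (Equiv.ofBijective f hbij) G' (fun w => by
      have := hf w
      rw [SimpleGraph.mem_neighborFinset] at this
      exact this)
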